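/- On a weak para-K-manifold, every characteristic vector field ξ_i is Killing (£_{ξ_i} g = 0) and ∇_{ξ_i} ξ_j = 0 for all i, j; consequently, ker f is integrable and defines a totally geodesic Riemannian foliation with flat leaves. -/
import Mathlib


open scoped BigOperators

noncomputable section

variable (C V : Type*) [CommRing C] [Algebra ℝ C] [AddCommGroup V]
  [Module ℝ V] [Module C V] [IsScalarTower ℝ C V]

/-- A metric weak para-f-structure on a manifold, modelled algebraically:
`C` plays the role of the ring of smooth functions, `V` the `C`-module of vector fields
with Lie bracket `b` and derivation action `act` of vector fields on functions,
`g` is a compatible pseudo-Riemannian metric (with `f` of rank `2n`, encoded by `hrank`)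
and `nabla` its Levi-Civita connection (torsion-free and metric). -/
structure MWPF (p : ℕ) where
  f : V →ₗ[C] V
  Q : V →ₗ[C] V
  ξ : Fin p → V
  η : Fin p → V →ₗ[C] C
  g : V →ₗ[C] V →ₗ[C] C
  b : V → V → V
  act : V → C → C
  nabla : V → V → V
  hQbij : Function.Bijective Q
  hf2 : ∀ X, f (f X) = Q X - ∑ i, η i X • ξ i
  hf3 : ∀ X, f (f (f X)) = f (Q X)
  hetaxi : ∀ i j, η i (ξ j) = if i = j then (1 : C) else 0
  hQxi : ∀ i, Q (ξ i) = ξ i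
  hrange : ∀ X : V, X ∈ LinearMap.range f ↔ ∀ i, η i X = 0
  hgsymm : ∀ X Y, g X Y = g Y X
  hgnondeg : ∀ X, (∀ Y, g X Y = 0) → X = 0
  hrank : ∀ Z, (∀ i, η i Z = 0) → (∀ Y, g Z (f Y) = 0) → Z = 0
  hgcompat : ∀ X Y, g (f X) (f Y) = -(g X (Q Y)) + ∑ i, η i X * η i Y
  hbskew : ∀ X Y, b X Y = - b Y X
  hbaddl : ∀ X Y Z, b (X + Y) Z = b X Z + b Y Z
  hjacobi : ∀ X Y Z, b X (b Y Z) + b Y (b Z X) + b Z (b X Y) = 0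
  hactadd : ∀ X a c, act X (a + c) = act X a + act X c
  hactmul : ∀ X a c, act X (a * c) = act X a * c + a * act X c
  hactX : ∀ (a : C) X Y c, act (a • X + Y) c = a * act X c + act Y c
  hbleib : ∀ X (a : C) Y, b X (a • Y) = act X a • Y + a • b X Y
  hnab1 : ∀ (a : C) X X' Y, nabla (a • X + X') Y = a • nabla X Y + nabla X' Y
  hnabadd : ∀ X Y Z, nabla X (Y + Z) = nabla X Y + nabla X Z
  hnableib : ∀ X (a : C) Y, nabla X (a • Y) = act X a • Y + a • nabla X Y
  htors : ∀ X Y, nabla X Y - nabla Y X = b X Y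
  hmetric : ∀ X Y Z, act X (g Y Z) = g (nabla X Y) Z + g Y (nabla X Z)

namespace MWPF

variable {C V} {p : ℕ} (s : MWPF C V p)

/-- The fundamental 2-form `Φ(X,Y) = g(X, fY)`. -/
def Phi (X Y : V) : C := s.g X (s.f Y)

/-- `dη^i(X,Y) = (1/2)(X(η^i Y) - Y(η^i X) - η^i [X,Y])`. -/
def dEta (i : Fin p) (X Y : V) : C :=
  (2⁻¹ : ℝ) • (s.act X (s.η i Y) - s.act Y (s.η i X) - s.η i (s.b X Y))

/-- The Nijenhuis torsion `[f,f]`. -/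
def Nij (X Y : V) : V :=
  s.f (s.f (s.b X Y)) + s.b (s.f X) (s.f Y) - s.f (s.b (s.f X) Y) - s.f (s.b X (s.f Y))

/-- `N^(1)(X,Y) = [f,f](X,Y) - 2 Σ_i dη^i(X,Y) ξ_i`. -/
def N1 (X Y : V) : V := s.Nij X Y - (2 : ℝ) • ∑ i, s.dEta i X Y • s.ξ i

/-- The difference tensor `Q̃ = Q - id`. -/
def Qt (X : V) : V := s.Q X - X

/-- The Lie derivative of `f`: `(£_Z f)X = [Z, fX] - f[Z,X]`. -/
def Lief (Z X : V) : V := s.b Z (s.f X) - s.f (s.b Z X)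

/-- The Lie derivative of `g`: `(£_Z g)(X,Y) = Z(g(X,Y)) - g([Z,X],Y) - g(X,[Z,Y])`. -/
def Lieg (Z X Y : V) : C := s.act Z (s.g X Y) - s.g (s.b Z X) Y - s.g X (s.b Z Y)

/-- `N^(2)_i(X,Y) = (£_{fX} η^i)Y - (£_{fY} η^i)X`. -/
def N2 (i : Fin p) (X Y : V) : C :=
  (s.act (s.f X) (s.η i Y) - s.η i (s.b (s.f X) Y))
    - (s.act (s.f Y) (s.η i X) - s.η i (s.b (s.f Y) X))

/-- The exterior differential of the fundamental 2-form. -/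
def dPhi (X Y Z : V) : C := (3⁻¹ : ℝ) •
  (s.act X (s.Phi Y Z) + s.act Y (s.Phi Z X) + s.act Z (s.Phi X Y)
    - s.Phi (s.b X Y) Z - s.Phi (s.b Z X) Y - s.Phi (s.b Y Z) X)

/-- The tensor `h_i = (1/2) £_{ξ_i} f`. -/
def hmap (i : Fin p) (X : V) : V := (2⁻¹ : ℝ) • s.Lief (s.ξ i) X

/-- The tensor `N^(5)`. -/
def N5 (X Y Z : V) : C :=
  s.act (s.f Z) (s.g X (s.Qt Y)) - s.act (s.f Y) (s.g X (s.Qt Z))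
    + s.g (s.b X (s.f Z)) (s.Qt Y) - s.g (s.b X (s.f Y)) (s.Qt Z)
    + s.g (s.b Y (s.f Z) - s.b Z (s.f Y) - s.f (s.b Y Z)) (s.Qt X)

/-- The curvature tensor of `nabla`. -/
def Rm (X Y Z : V) : V :=
  s.nabla X (s.nabla Y Z) - s.nabla Y (s.nabla X Z) - s.nabla (s.b X Y) Z

end MWPF

/-! ### Auxiliary lemmas -/

private lemma rsmul_cancel {M : Type*} [AddCommGroup M] [Module ℝ M] {r : ℝ}
    (hr : r ≠ 0) {x : M} (h : r • x = 0) : x = 0 := by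
  have := congrArg (fun y => r⁻¹ • y) h
  simpa [smul_smul, inv_mul_cancel₀ hr] using this

private lemma add_self_eq_zero' {M : Type*} [AddCommGroup M] [Module ℝ M] {x : M}
    (h : x + x = 0) : x = 0 := by
  refine rsmul_cancel (two_ne_zero (α := ℝ)) ?_
  rw [two_smul]; exact h

set_option linter.unusedSectionVars false

namespace MWPF

variable {C V : Type*} [CommRing C] [Algebra ℝ C] [AddCommGroup V]
  [Module ℝ V] [Module C V] [IsScalarTower ℝ C V] {p : ℕ} (s : MWPF C V p)

lemma act_zero (X : V) : s.act X 0 = 0 := by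
  have h := s.hactadd X 0 0
  simp only [add_zero] at h
  exact (left_eq_add.mp h)

lemma act_one (X : V) : s.act X 1 = 0 := by
  have h := s.hactmul X 1 1
  simp only [mul_one, one_mul] at h
  exact (left_eq_add.mp h)

lemma act_ite (X : V) (P : Prop) [Decidable P] :
    s.act X (if P then (1 : C) else 0) = 0 := by
  split
  · exact s.act_one X
  · exact s.act_zero X

lemma b_zero_left (Z : V) : s.b 0 Z = 0 := by
  have h := s.hbaddl 0 0 Z
  simp only [add_zero] at h
  exact (left_eq_add.mp h)

lemma b_add_right (Z X X' : V) : s.b Z (X + X') = s.b Z X + s.b Z X' := by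
  rw [s.hbskew Z (X + X'), s.hbaddl, s.hbskew X Z, s.hbskew X' Z]
  abel

lemma nabla_zero_right (X : V) : s.nabla X 0 = 0 := by
  have h := s.hnabadd X 0 0
  simp only [add_zero] at h
  exact (left_eq_add.mp h)

lemma nabla_zero_left (Y : V) : s.nabla 0 Y = 0 := by
  have h := s.hnab1 1 0 0 Y
  simp only [smul_zero, add_zero, one_smul] at h
  exact (left_eq_add.mp h)

lemma eta_sum_ite (j : Fin p) (a : Fin p → C) :
    s.η j (∑ k, a k • s.ξ k) = a j := by
  rw [map_sum]
  simp [map_smul, s.hetaxi, mul_ite, Finset.sum_ite_eq]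

lemma f2xi (i : Fin p) : s.f (s.f (s.ξ i)) = 0 := by
  rw [s.hf2, s.hQxi]
  have h : (∑ k, s.η k (s.ξ i) • s.ξ k) = s.ξ i := by
    simp [s.hetaxi, ite_smul, Finset.sum_ite_eq']
  rw [h, sub_self]

lemma fxi (i : Fin p) : s.f (s.ξ i) = 0 := by
  have h := s.hf3 (s.ξ i)
  rw [s.f2xi, s.hQxi, map_zero] at h
  exact h.symm

lemma eta_f (i : Fin p) (X : V) : s.η i (s.f X) = 0 :=
  (s.hrange (s.f X)).mp ⟨X, rfl⟩ i

lemma etaQ (i : Fin p) (X : V) : s.η i (s.Q X) = s.η i X := by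
  have h := congrArg (s.η i) (s.hf2 X)
  rw [s.eta_f, map_sub, s.eta_sum_ite] at h
  linear_combination -h

lemma Qf (X : V) : s.Q (s.f X) = s.f (s.Q X) := by
  have h := s.hf2 (s.f X)
  rw [s.hf3] at h
  simp only [s.eta_f, zero_smul, Finset.sum_const_zero, sub_zero] at h
  exact h.symm

lemma gxiQ (i : Fin p) (Y : V) : s.g (s.ξ i) (s.Q Y) = s.η i Y := by
  have h := s.hgcompat (s.ξ i) Y
  rw [s.fxi, map_zero, LinearMap.zero_apply] at h
  simp only [s.hetaxi, ite_mul, one_mul, zero_mul, Finset.sum_ite_eq, Finset.sum_ite_eq',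
    Finset.mem_univ, if_true] at h
  linear_combination h

lemma Qsa (X Y : V) : s.g (s.Q X) Y = s.g X (s.Q Y) := by
  have h1 := s.hgcompat X Y
  have h2 := s.hgcompat Y X
  have h3 : s.g (s.f X) (s.f Y) = s.g (s.f Y) (s.f X) := s.hgsymm _ _
  have h4 : (∑ i, s.η i X * s.η i Y) = ∑ i, s.η i Y * s.η i X :=
    Finset.sum_congr rfl fun k _ => mul_comm _ _
  have h5 : s.g X (s.Q Y) = s.g Y (s.Q X) := by linear_combination h1 - h2 - h3 + h4
  rw [s.hgsymm (s.Q X) Y] at *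
  linear_combination -h5

lemma gxi_f (k : Fin p) (X : V) : s.g (s.ξ k) (s.f X) = 0 := by
  obtain ⟨Z, hZ⟩ := s.hQbij.2 (s.f X)
  rw [← hZ, s.gxiQ, ← s.etaQ, hZ, s.eta_f]

lemma fskew (X Y : V) : s.g (s.f X) Y = -(s.g X (s.f Y)) := by
  obtain ⟨W, hW⟩ := s.hQbij.2 Y
  subst hW
  have h1 := s.hgcompat X (s.f W)
  rw [s.hf2 W] at h1
  rw [map_sub, map_sum] at h1
  have h2 : (∑ k, s.g (s.f X) (s.η k W • s.ξ k)) = 0 := by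
    refine Finset.sum_eq_zero fun k _ => ?_
    rw [map_smul, s.hgsymm (s.f X) (s.ξ k), s.gxi_f, smul_zero]
  have h3 : (∑ k, s.η k X * s.η k (s.f W)) = 0 := by
    refine Finset.sum_eq_zero fun k _ => ?_
    rw [s.eta_f, mul_zero]
  rw [h2, h3, sub_zero, add_zero, s.Qf] at h1
  linear_combination h1

lemma gxi (i : Fin p) (B : V) : s.g (s.ξ i) B = s.η i B := by
  obtain ⟨Z, hZ⟩ := s.hQbij.2 B
  rw [← hZ, s.gxiQ, ← s.etaQ]

section Normal

variable (hN : ∀ X Y : V, s.N1 X Y = 0)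

include hN

lemma nij_eta (j : Fin p) (X Y : V) :
    (2 : ℝ) • s.dEta j X Y = s.η j (s.b (s.f X) (s.f Y)) := by
  have h : s.Nij X Y = (2 : ℝ) • ∑ i, s.dEta i X Y • s.ξ i := by
    have h0 := hN X Y
    simp only [N1] at h0
    exact sub_eq_zero.mp h0
  have h2 := congrArg (s.η j) h
  simp only [Nij, map_add, map_sub, s.eta_f, add_zero, sub_zero, zero_add] at h2
  rw [LinearMap.map_smul_of_tower, s.eta_sum_ite] at h2
  exact h2.symm

lemma deta_xi (j i : Fin p) (Y : V) : s.dEta j (s.ξ i) Y = 0 := by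
  have h := s.nij_eta hN j (s.ξ i) Y
  rw [s.fxi, s.b_zero_left, map_zero] at h
  exact rsmul_cancel (two_ne_zero (α := ℝ)) h

lemma act_eta_xi (i j : Fin p) (Y : V) :
    s.act (s.ξ i) (s.η j Y) = s.η j (s.b (s.ξ i) Y) := by
  have h := s.deta_xi hN j i Y
  simp only [dEta] at h
  have h2 := rsmul_cancel (inv_ne_zero (two_ne_zero (α := ℝ))) h
  rw [s.hetaxi, s.act_ite, sub_zero] at h2
  exact sub_eq_zero.mp h2

lemma norm_xi (i : Fin p) (Y : V) :
    s.f (s.f (s.b (s.ξ i) Y)) = s.f (s.b (s.ξ i) (s.f Y)) := by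
  have h := hN (s.ξ i) Y
  have hs : (∑ k, s.dEta k (s.ξ i) Y • s.ξ k) = (0 : V) := by
    refine Finset.sum_eq_zero fun k _ => ?_
    rw [s.deta_xi hN, zero_smul]
  simp only [N1, Nij, s.fxi, s.b_zero_left, map_zero, hs, smul_zero, add_zero,
    sub_zero] at h
  exact sub_eq_zero.mp h

end Normal

section DPhi

variable (hPhi : ∀ X Y Z : V, s.dPhi X Y Z = 0)

include hPhi

lemma dPhi_xi (i : Fin p) (X Y : V) :
    s.act (s.ξ i) (s.g X (s.f Y)) =
      s.g (s.b (s.ξ i) X) (s.f Y) - s.g (s.b (s.ξ i) Y) (s.f X) := by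
  have h := hPhi (s.ξ i) X Y
  simp only [dPhi, Phi] at h
  have h2 := rsmul_cancel (inv_ne_zero (three_ne_zero (α := ℝ))) h
  rw [s.fxi, map_zero] at h2
  rw [s.act_zero, s.gxi_f, s.act_zero, s.hbskew Y (s.ξ i)] at h2
  simp only [map_neg, LinearMap.neg_apply, map_zero, LinearMap.zero_apply] at h2
  linear_combination h2

end DPhi

section Main

variable (hN : ∀ X Y : V, s.N1 X Y = 0) (hPhi : ∀ X Y Z : V, s.dPhi X Y Z = 0)

include hN hPhi

lemma b_xi_xi (i j : Fin p) : s.b (s.ξ i) (s.ξ j) = 0 := by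
  apply s.hrank
  · intro k
    rw [← s.act_eta_xi hN i k (s.ξ j), s.hetaxi, s.act_ite]
  · intro Y
    have h := s.dPhi_xi hPhi i (s.ξ j) Y
    rw [s.gxi_f, s.act_zero, s.fxi, map_zero] at h
    rw [sub_zero] at h
    exact h.symm

lemma lieg_xi_xi (i j : Fin p) (Y : V) : s.Lieg (s.ξ i) (s.ξ j) Y = 0 := by
  simp only [Lieg, s.b_xi_xi hN hPhi, s.gxi, s.act_eta_xi hN, map_zero,
    LinearMap.zero_apply]
  ring

lemma lieg_ff (i : Fin p) (U W : V) : s.Lieg (s.ξ i) (s.f U) (s.f W) = 0 := by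
  simp only [Lieg]
  rw [s.dPhi_xi hPhi i (s.f U) W]
  have e1 : s.g (s.f U) (s.b (s.ξ i) (s.f W)) =
      -(s.g U (s.f (s.f (s.b (s.ξ i) W)))) := by
    rw [s.fskew, s.norm_xi hN]
  have e2 : s.g (s.b (s.ξ i) W) (s.f (s.f U)) =
      s.g (s.b (s.ξ i) W) (s.Q U) - ∑ k, s.η k U * s.η k (s.b (s.ξ i) W) := by
    rw [s.hf2 U, map_sub, map_sum]
    congr 1
    refine Finset.sum_congr rfl fun k _ => ?_
    rw [map_smul, s.hgsymm (s.b (s.ξ i) W) (s.ξ k), s.gxi, smul_eq_mul, mul_comm]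
  have e3 : s.g U (s.f (s.f (s.b (s.ξ i) W))) =
      s.g (s.b (s.ξ i) W) (s.Q U) - ∑ k, s.η k U * s.η k (s.b (s.ξ i) W) := by
    rw [s.hf2 (s.b (s.ξ i) W), map_sub, map_sum]
    have hq : s.g U (s.Q (s.b (s.ξ i) W)) = s.g (s.b (s.ξ i) W) (s.Q U) := by
      rw [← s.Qsa, s.hgsymm]
    rw [hq]
    congr 1
    refine Finset.sum_congr rfl fun k _ => ?_
    rw [map_smul, s.hgsymm U (s.ξ k), s.gxi, smul_eq_mul, mul_comm]
  linear_combination -e1 - e2 + e3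

end Main

lemma lieg_symm (Z X Y : V) : s.Lieg Z X Y = s.Lieg Z Y X := by
  simp only [Lieg]
  rw [s.hgsymm X Y, s.hgsymm (s.b Z X) Y, s.hgsymm X (s.b Z Y)]
  ring

lemma lieg_add (Z X X' Y : V) :
    s.Lieg Z (X + X') Y = s.Lieg Z X Y + s.Lieg Z X' Y := by
  simp only [Lieg, s.b_add_right, map_add, LinearMap.add_apply, s.hactadd]
  ring

lemma lieg_smul (Z : V) (a : C) (X Y : V) :
    s.Lieg Z (a • X) Y = a * s.Lieg Z X Y := by
  simp only [Lieg, s.hbleib, map_add, map_smul, LinearMap.add_apply,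
    LinearMap.smul_apply, smul_eq_mul, s.hactmul]
  ring

lemma lieg_zero (Z Y : V) : s.Lieg Z 0 Y = 0 := by
  have h := s.lieg_smul Z 0 0 Y
  simpa using h

lemma decomp (X : V) : ∃ U, X = s.f U + ∑ k, s.η k X • s.ξ k := by
  have hm : (X - ∑ k, s.η k X • s.ξ k) ∈ LinearMap.range s.f := by
    rw [s.hrange]
    intro j
    rw [map_sub, s.eta_sum_ite, sub_self]
  obtain ⟨U, hU⟩ := hm
  exact ⟨U, by rw [hU]; abel⟩

lemma killing (hN : ∀ X Y : V, s.N1 X Y = 0) (hPhi : ∀ X Y Z : V, s.dPhi X Y Z = 0)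
    (i : Fin p) (X Y : V) : s.Lieg (s.ξ i) X Y = 0 := by
  have hspan : ∀ (Y : V) (Z : V), Z ∈ Submodule.span C (Set.range s.ξ) →
      s.Lieg (s.ξ i) Z Y = 0 := by
    intro Y Z hZ
    induction hZ using Submodule.span_induction with
    | mem z hz =>
        obtain ⟨j, rfl⟩ := hz
        exact s.lieg_xi_xi hN hPhi i j Y
    | zero => exact s.lieg_zero _ _
    | add x y _ _ hx hy => rw [s.lieg_add, hx, hy, add_zero]
    | smul a x _ hx => rw [s.lieg_smul, hx, mul_zero]
  have hmem : ∀ X : V, (∑ k, s.η k X • s.ξ k) ∈ Submodule.span C (Set.range s.ξ) :=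
    fun X => Submodule.sum_mem _ fun k _ =>
      Submodule.smul_mem _ _ (Submodule.subset_span ⟨k, rfl⟩)
  have key : ∀ U Y, s.Lieg (s.ξ i) (s.f U) Y = 0 := by
    intro U Y
    obtain ⟨W, hW⟩ := s.decomp Y
    rw [s.lieg_symm, hW, s.lieg_add, s.lieg_symm _ (s.f W),
      s.lieg_ff hN hPhi, hspan _ _ (hmem Y), add_zero]
  obtain ⟨U, hU⟩ := s.decomp X
  rw [hU, s.lieg_add, key, hspan _ _ (hmem X), add_zero]

lemma lieg_nabla (Z X Y : V) :
    s.Lieg Z X Y = s.g (s.nabla X Z) Y + s.g X (s.nabla Y Z) := by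
  simp only [Lieg]
  rw [s.hmetric Z X Y, ← s.htors Z X, ← s.htors Z Y]
  simp only [map_sub, LinearMap.sub_apply]
  ring

lemma nabla_xi_xi (hN : ∀ X Y : V, s.N1 X Y = 0)
    (hPhi : ∀ X Y Z : V, s.dPhi X Y Z = 0) (i j : Fin p) :
    s.nabla (s.ξ i) (s.ξ j) = 0 := by
  have kill : ∀ (k : Fin p) (X Y : V),
      s.g (s.nabla X (s.ξ k)) Y + s.g X (s.nabla Y (s.ξ k)) = 0 := by
    intro k X Y
    rw [← s.lieg_nabla]
    exact s.killing hN hPhi k X Y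
  apply s.hgnondeg
  intro Z
  have e1 := kill j (s.ξ i) Z
  have e2 := kill i (s.ξ j) Z
  have e4 : s.nabla (s.ξ j) (s.ξ i) = s.nabla (s.ξ i) (s.ξ j) := by
    have h := s.htors (s.ξ i) (s.ξ j)
    rw [s.b_xi_xi hN hPhi] at h
    exact (sub_eq_zero.mp h).symm
  rw [e4] at e2
  have e3 : s.g (s.ξ i) (s.nabla Z (s.ξ j)) + s.g (s.ξ j) (s.nabla Z (s.ξ i)) = 0 := by
    have h := s.hmetric Z (s.ξ i) (s.ξ j)
    have hc : s.g (s.ξ i) (s.ξ j) = if i = j then 1 else 0 := by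
      rw [s.gxi, s.hetaxi]
    rw [hc, s.act_ite, s.hgsymm (s.nabla Z (s.ξ i)) (s.ξ j)] at h
    linear_combination -h
  have e5 : s.g (s.nabla (s.ξ i) (s.ξ j)) Z + s.g (s.nabla (s.ξ i) (s.ξ j)) Z = 0 := by
    have h1 : s.g (s.nabla (s.ξ i) (s.ξ j)) Z = s.g (s.ξ i) (s.nabla Z (s.ξ j)) →
        True := fun _ => trivial
    rw [s.hgsymm (s.ξ i) (s.nabla Z (s.ξ j)), s.hgsymm (s.ξ j) (s.nabla Z (s.ξ i))]
      at e3
    rw [s.hgsymm (s.ξ i) (s.nabla Z (s.ξ j))] at e1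
    rw [s.hgsymm (s.ξ j) (s.nabla Z (s.ξ i))] at e2
    linear_combination e1 + e2 - e3
  exact add_self_eq_zero' e5

end MWPF


/-- on a weak para-K-manifold (normal, `dΦ = 0`), each `ξ_i` is Killing and
`∇_{ξ_i} ξ_j = 0`; consequently `ker f` is integrable and defines a totally geodesic
Riemannian foliation with flat leaves. -/
theorem paraK_xi_Killing {C V : Type*} [CommRing C] [Algebra ℝ C] [AddCommGroup V]
    [Module ℝ V] [Module C V] [IsScalarTower ℝ C V] {p : ℕ} (s : MWPF C V p)
    (hN : ∀ X Y, s.N1 X Y = 0) (hPhi : ∀ X Y Z, s.dPhi X Y Z = 0) :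
    (∀ (i : Fin p) (X Y : V), s.Lieg (s.ξ i) X Y = 0) ∧
    (∀ i j : Fin p, s.nabla (s.ξ i) (s.ξ j) = 0) ∧
    (∀ i j : Fin p, s.b (s.ξ i) (s.ξ j) ∈ Submodule.span C (Set.range s.ξ)) ∧
    (∀ i j : Fin p, s.g (s.Rm (s.ξ i) (s.ξ j) (s.ξ j)) (s.ξ i) = 0) := by
  refine ⟨s.killing hN hPhi, s.nabla_xi_xi hN hPhi, ?_, ?_⟩
  · intro i j
    rw [s.b_xi_xi hN hPhi]
    exact Submodule.zero_mem _
  · intro i j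
    have hR : s.Rm (s.ξ i) (s.ξ j) (s.ξ j) = 0 := by
      simp only [MWPF.Rm, s.nabla_xi_xi hN hPhi, s.b_xi_xi hN hPhi,
        s.nabla_zero_right, s.nabla_zero_left, sub_zero, sub_self]
    rw [hR, map_zero, LinearMap.zero_apply]
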